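/- Let M ⊆ ℤ×ℤ be finite with G_Δ|_M connected and hole-free, let g,g' ∈ M, let q ∈ {x,y,z}, let d_q := d_{M,q}(g,g'), and let P_q := {v ∈ M : d_{M,q}(g,v) = ⌈d_q/2⌉ and d_{M,q}(g',v) = ⌊d_q/2⌋}. Then every path from g to g' in the induced subgraph G_Δ|_M contains at least one vertex of P_q. -/

import Mathlib

open SimpleGraph

/-- The infinite triangular grid graph on `ℤ × ℤ`. -/
def triGrid : SimpleGraph (ℤ × ℤ) where
  Adj u v := u - v = (1, 0) ∨ u - v = (-1, 0) ∨ u - v = (0, 1) ∨ u - v = (0, -1) ∨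
    u - v = (1, -1) ∨ u - v = (-1, 1)
  symm := by
    constructor
    intro u v h
    have hvu : v - u = -(u - v) := by ring
    rcases h with h | h | h | h | h | h <;> rw [hvu, h] <;> simp [Prod.ext_iff]
  loopless := by
    constructor
    intro u h
    simp [Prod.ext_iff] at h


lemma triGrid_adj_coords {u v : ℤ × ℤ} (h : triGrid.Adj u v) :
    (u.1 = v.1 + 1 ∧ u.2 = v.2) ∨ (u.1 + 1 = v.1 ∧ u.2 = v.2) ∨
    (u.1 = v.1 ∧ u.2 = v.2 + 1) ∨ (u.1 = v.1 ∧ u.2 + 1 = v.2) ∨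
    (u.1 = v.1 + 1 ∧ u.2 + 1 = v.2) ∨ (u.1 + 1 = v.1 ∧ u.2 = v.2 + 1) := by
  rcases h with h|h|h|h|h|h <;>
    (have h1 := congrArg Prod.fst h; have h2 := congrArg Prod.snd h;
     simp only [Prod.fst_sub, Prod.snd_sub] at h1 h2; omega)

/-- crossing contribution of a step `u → v` to the winding number around `z`
(crossings of the rightward horizontal ray at height `z.2 + 1/2`). -/
def chi (z u v : ℤ × ℤ) : ℤ :=
  if u.2 = z.2 ∧ v.2 = z.2 + 1 ∧ z.1 < u.1 then 1
  else if v.2 = z.2 ∧ u.2 = z.2 + 1 ∧ z.1 < v.1 then -1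
  else 0

noncomputable def wind (z : ℤ × ℤ) {a b : ℤ × ℤ} (p : triGrid.Walk a b) : ℤ :=
  (p.darts.map (fun d => chi z d.toProd.1 d.toProd.2)).sum

@[simp] lemma wind_nil (z a : ℤ × ℤ) : wind z (Walk.nil' (G := triGrid) a) = 0 := by
  simp [wind]

lemma wind_cons (z : ℤ × ℤ) {a b c : ℤ × ℤ} (h : triGrid.Adj a b) (p : triGrid.Walk b c) :
    wind z (Walk.cons h p) = chi z a b + wind z p := by
  simp [wind, Walk.darts_cons]

lemma wind_append (z : ℤ × ℤ) {a b c : ℤ × ℤ} (p : triGrid.Walk a b) (q : triGrid.Walk b c) :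
    wind z (p.append q) = wind z p + wind z q := by
  simp [wind, Walk.darts_append]

lemma chi_ex (p q : ℤ) {u v : ℤ × ℤ} (h : triGrid.Adj u v)
    (hu : u ≠ (p+1, q)) (hv : v ≠ (p+1, q)) :
    chi (p,q) u v = chi (p+1,q) u v := by
  obtain ⟨u1,u2⟩ := u; obtain ⟨v1,v2⟩ := v
  have hc := triGrid_adj_coords h
  simp only [ne_eq, Prod.mk.injEq, not_and] at hu hv
  simp only [chi]
  split_ifs <;> omega

lemma chi_ey (p q : ℤ) {u v : ℤ × ℤ} (h : triGrid.Adj u v)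
    (hu : u ≠ (p, q+1)) (hv : v ≠ (p, q+1)) :
    chi (p,q) u v - chi (p,q+1) u v =
      (if v.2 = q + 1 ∧ p < v.1 then 1 else 0) - (if u.2 = q + 1 ∧ p < u.1 then 1 else 0) := by
  obtain ⟨u1,u2⟩ := u; obtain ⟨v1,v2⟩ := v
  have hc := triGrid_adj_coords h
  simp only [ne_eq, Prod.mk.injEq, not_and] at hu hv
  simp only [chi]
  split_ifs <;> omega

set_option maxHeartbeats 2000000 in
lemma chi_ez (p q : ℤ) {u v : ℤ × ℤ} (h : triGrid.Adj u v)
    (hu1 : u ≠ (p, q)) (hu2 : u ≠ (p+1, q-1)) (hv1 : v ≠ (p, q)) (hv2 : v ≠ (p+1, q-1)) :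
    chi (p,q) u v - chi (p+1,q-1) u v =
      (-(if v.2 = q ∧ p < v.1 then 1 else 0)) - (-(if u.2 = q ∧ p < u.1 then 1 else 0)) := by
  obtain ⟨u1,u2⟩ := u; obtain ⟨v1,v2⟩ := v
  have hc := triGrid_adj_coords h
  simp only [ne_eq, Prod.mk.injEq, not_and] at hu1 hu2 hv1 hv2
  simp only [chi]
  split_ifs <;> omega

lemma wind_tele (z z' : ℤ × ℤ) (F : ℤ × ℤ → ℤ)
    (key : ∀ ⦃u v : ℤ × ℤ⦄, triGrid.Adj u v → u ≠ z → u ≠ z' → v ≠ z → v ≠ z' →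
      chi z u v - chi z' u v = F v - F u) :
    ∀ {a b : ℤ × ℤ} (p : triGrid.Walk a b), (∀ x ∈ p.support, x ≠ z ∧ x ≠ z') →
      wind z p - wind z' p = F b - F a := by
  intro a b p
  induction p with
  | nil => intro _; simp [wind]
  | @cons a b c h q ih =>
    intro hs
    have ha := hs a (by simp [Walk.support_cons])
    have hb := hs b (by simp [Walk.support_cons, Walk.start_mem_support])
    have hkey := key h ha.1 ha.2 hb.1 hb.2
    have hih := ih (fun x hx => hs x (by simp [Walk.support_cons]; right; exact hx))
    rw [wind_cons, wind_cons]
    omega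

lemma wind_closed_adj {z z' : ℤ × ℤ} (hadj : triGrid.Adj z z') {a : ℤ × ℤ}
    (p : triGrid.Walk a a) (h : ∀ x ∈ p.support, x ≠ z ∧ x ≠ z') :
    wind z p = wind z' p := by
  obtain ⟨z1, z2⟩ := z; obtain ⟨w1, w2⟩ := z'
  have hc := triGrid_adj_coords hadj
  simp only at hc
  have hsymm : ∀ x ∈ p.support, x ≠ (w1, w2) ∧ x ≠ (z1, z2) := fun x hx => (h x hx).symm
  rcases hc with ⟨h1,h2⟩|⟨h1,h2⟩|⟨h1,h2⟩|⟨h1,h2⟩|⟨h1,h2⟩|⟨h1,h2⟩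
  -- z = z' + (1,0)
  · have : (z1, z2) = (w1 + 1, w2) := by simp [h1, h2]
    rw [this]
    have := wind_tele (w1, w2) (w1+1, w2) (fun _ => 0)
      (fun u v h hu hv hu' hv' => by rw [chi_ex w1 w2 h hv hv']; ring) p
      (by rw [this] at hsymm; exact hsymm)
    omega
  -- z' = z + (1,0)
  · have hw : (w1, w2) = (z1 + 1, z2) := by simp [h1, h2]
    rw [hw]
    have := wind_tele (z1, z2) (z1+1, z2) (fun _ => 0)
      (fun u v h hu hv hu' hv' => by rw [chi_ex z1 z2 h hv hv']; ring) p
      (by rw [hw] at h; exact h)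
    omega
  -- z = z' + (0,1)
  · have hz : (z1, z2) = (w1, w2 + 1) := by simp [h1, h2]
    rw [hz]
    have := wind_tele (w1, w2) (w1, w2+1)
      (fun t => if t.2 = w2 + 1 ∧ w1 < t.1 then 1 else 0)
      (fun u v hadj hu hu' hv hv' => chi_ey w1 w2 hadj hu' hv') p
      (by rw [hz] at hsymm; exact fun x hx => (hsymm x hx))
    omega
  -- z' = z + (0,1)
  · have hw : (w1, w2) = (z1, z2 + 1) := by simp [h1, h2]
    rw [hw]
    have := wind_tele (z1, z2) (z1, z2+1)
      (fun t => if t.2 = z2 + 1 ∧ z1 < t.1 then 1 else 0)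
      (fun u v hadj hu hu' hv hv' => chi_ey z1 z2 hadj hu' hv') p
      (by rw [hw] at h; exact h)
    omega
  -- z = z' + (1,-1) : z' = (z1 - 1, z2 + 1)?? here u.1 = v.1+1, u.2+1 = v.2 with u=z,v=z':
  -- z1 = w1 + 1, z2 + 1 = w2, so z' = z + (-1,1), i.e. z = z' + (1,-1): use chi_ez with base z' :
  -- chi (w1,w2) - chi (w1+1, w2-1) with (w1+1,w2-1) = z.
  · have hz : (z1, z2) = (w1 + 1, w2 - 1) := by rw [Prod.mk.injEq]; omega
    rw [hz]
    have := wind_tele (w1, w2) (w1+1, w2-1)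
      (fun t => -(if t.2 = w2 ∧ w1 < t.1 then 1 else 0))
      (fun u v hadj hu hu' hv hv' => chi_ez w1 w2 hadj hu hu' hv hv') p
      (by rw [hz] at hsymm; exact hsymm)
    omega
  -- z' = z + (1,-1)
  · have hw : (w1, w2) = (z1 + 1, z2 - 1) := by rw [Prod.mk.injEq]; omega
    rw [hw]
    have := wind_tele (z1, z2) (z1+1, z2-1)
      (fun t => -(if t.2 = z2 ∧ z1 < t.1 then 1 else 0))
      (fun u v hadj hu hu' hv hv' => chi_ez z1 z2 hadj hu hu' hv hv') p
      (by rw [hw] at h; exact h)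
    omega

lemma chi_zero_row {z u v : ℤ × ℤ} (hu : u.2 ≠ z.2) (hv : v.2 ≠ z.2) : chi z u v = 0 := by
  simp only [chi]; split_ifs <;> omega

lemma chi_zero_xle {z u v : ℤ × ℤ} (hu : u.1 ≤ z.1) (hv : v.1 ≤ z.1) : chi z u v = 0 := by
  simp only [chi]; split_ifs <;> omega

lemma wind_zero_rows (z : ℤ × ℤ) {a b : ℤ × ℤ} (p : triGrid.Walk a b)
    (h : ∀ x ∈ p.support, x.2 ≠ z.2) : wind z p = 0 := by
  apply List.sum_eq_zero
  intro t ht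
  simp only [List.mem_map] at ht
  obtain ⟨d, hd, rfl⟩ := ht
  exact chi_zero_row (h _ (Walk.dart_fst_mem_support_of_mem_darts p hd))
    (h _ (Walk.dart_snd_mem_support_of_mem_darts p hd))

lemma wind_zero_xle (z : ℤ × ℤ) {a b : ℤ × ℤ} (p : triGrid.Walk a b)
    (h : ∀ x ∈ p.support, x.1 ≤ z.1) : wind z p = 0 := by
  apply List.sum_eq_zero
  intro t ht
  simp only [List.mem_map] at ht
  obtain ⟨d, hd, rfl⟩ := ht
  exact chi_zero_xle (h _ (Walk.dart_fst_mem_support_of_mem_darts p hd))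
    (h _ (Walk.dart_snd_mem_support_of_mem_darts p hd))

lemma chi_pot {z u v : ℤ × ℤ} (h : triGrid.Adj u v) (hu : z.1 < u.1) (hv : z.1 < v.1) :
    chi z u v = (if z.2 < v.2 then (1:ℤ) else 0) - (if z.2 < u.2 then 1 else 0) := by
  obtain ⟨u1,u2⟩ := u; obtain ⟨v1,v2⟩ := v
  have hc := triGrid_adj_coords h
  simp only [chi]
  split_ifs <;> omega

lemma wind_pot (z : ℤ × ℤ) : ∀ {a b : ℤ × ℤ} (p : triGrid.Walk a b),
    (∀ x ∈ p.support, z.1 < x.1) →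
    wind z p = (if z.2 < b.2 then (1:ℤ) else 0) - (if z.2 < a.2 then 1 else 0) := by
  intro a b p
  induction p with
  | nil => intro _; simp [wind]
  | @cons a b c h q ih =>
    intro hs
    have ha := hs a (by simp [Walk.support_cons])
    have hb := hs b (by simp [Walk.support_cons, Walk.start_mem_support])
    have hkey := chi_pot h ha hb
    have hih := ih (fun x hx => hs x (by simp [Walk.support_cons]; right; exact hx))
    rw [wind_cons, hkey, hih]
    ring

lemma exists_bound (l : List (ℤ × ℤ)) :
    ∃ B : ℤ, ∀ x ∈ l, -B < x.1 ∧ x.1 < B ∧ -B < x.2 ∧ x.2 < B := by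
  induction l with
  | nil => exact ⟨1, by simp⟩
  | cons a l ih =>
    obtain ⟨B, hB⟩ := ih
    refine ⟨max B (|a.1| + |a.2| + 1), ?_⟩
    intro x hx
    rcases List.mem_cons.mp hx with rfl | hx
    · have h1 := abs_nonneg x.1; have h2 := abs_nonneg x.2
      have h3 := le_abs_self x.1; have h4 := neg_abs_le x.1
      have h5 := le_abs_self x.2; have h6 := neg_abs_le x.2
      constructor
      · have := le_max_right B (|x.1| + |x.2| + 1); omega
      constructor
      · have := le_max_right B (|x.1| + |x.2| + 1); omega
      constructor
      · have := le_max_right B (|x.1| + |x.2| + 1); omega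
      · have := le_max_right B (|x.1| + |x.2| + 1); omega
    · have := hB x hx
      have := le_max_left B (|a.1| + |a.2| + 1)
      omega


/-- A finite set is hole-free (simple) if every connected component of the complement
is infinite, i.e., there are no inner holes. -/
def HoleFree (S : Set (ℤ × ℤ)) : Prop :=
  ∀ C : (triGrid.induce Sᶜ).ConnectedComponent, C.supp.Infinite


lemma wind_const_on_component {a : ℤ × ℤ} (p : triGrid.Walk a a)
    {M : Set (ℤ × ℤ)} (hp : ∀ x ∈ p.support, x ∈ M) :
    ∀ {u v : ↥(Mᶜ)} (_ : (triGrid.induce Mᶜ).Walk u v), wind u.val p = wind v.val p := by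
  intro u v q
  induction q with
  | nil => rfl
  | @cons u v w h q ih =>
    have hadj : triGrid.Adj u.val v.val := h
    have h1 : wind u.val p = wind v.val p := by
      apply wind_closed_adj hadj p
      intro x hx
      have hxM := hp x hx
      exact ⟨fun hc => u.2 (hc ▸ hxM), fun hc => v.2 (hc ▸ hxM)⟩
    rw [h1, ih]

theorem wind_closed_eq_zero {M : Set (ℤ × ℤ)} (hfin : M.Finite) (hsimple : HoleFree M)
    {a : ℤ × ℤ} (p : triGrid.Walk a a) (hp : ∀ x ∈ p.support, x ∈ M)
    {z : ℤ × ℤ} (hz : z ∉ M) : wind z p = 0 := by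
  obtain ⟨B, hB⟩ := exists_bound p.support
  have far0 : ∀ y : ℤ × ℤ, (B ≤ y.1 ∨ y.1 ≤ -B ∨ B ≤ y.2 ∨ y.2 ≤ -B) → wind y p = 0 := by
    intro y hy
    rcases hy with hy | hy | hy | hy
    · exact wind_zero_xle y p (fun x hx => by have := hB x hx; omega)
    · have := wind_pot y p (fun x hx => by have := hB x hx; omega)
      simpa using this
    · exact wind_zero_rows y p (fun x hx => by have := hB x hx; omega)
    · exact wind_zero_rows y p (fun x hx => by have := hB x hx; omega)
  set z' : ↥(Mᶜ) := ⟨z, hz⟩ with hz'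
  have hinf := hsimple ((triGrid.induce Mᶜ).connectedComponentMk z')
  have hSinf : (Subtype.val '' ((triGrid.induce Mᶜ).connectedComponentMk z').supp).Infinite :=
    Set.Infinite.image (Set.injOn_of_injective Subtype.val_injective) hinf
  have hboxfin : (Set.Icc (-B) B ×ˢ Set.Icc (-B) B : Set (ℤ × ℤ)).Finite :=
    Set.Finite.prod (Set.finite_Icc _ _) (Set.finite_Icc _ _)
  obtain ⟨yv, hyv, hybox⟩ := (hSinf.diff hboxfin).nonempty
  obtain ⟨y0, hy0, rfl⟩ := hyv
  have hreach : (triGrid.induce Mᶜ).Reachable z' y0 :=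
    SimpleGraph.ConnectedComponent.exact hy0.symm
  refine hreach.elim fun q => ?_
  have := wind_const_on_component p hp q
  rw [this]
  apply far0
  simp only [Set.mem_prod, Set.mem_Icc, not_and_or, not_and, not_le] at hybox
  rcases hybox with h | h <;> rcases h with h | h <;> omega


/-- The graph on `V` whose edges are the edges of the induced grid graph in direction `±e`. -/
def portalLineGraph (V : Set (ℤ × ℤ)) (e : ℤ × ℤ) : SimpleGraph V where
  Adj u v := triGrid.Adj u v ∧ ((u : ℤ × ℤ) - v = e ∨ (v : ℤ × ℤ) - u = e)
  symm := ⟨fun u v ⟨h, h'⟩ => ⟨h.symm, h'.symm⟩⟩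
  loopless := ⟨fun u ⟨h, _⟩ => triGrid.ne_of_adj h rfl⟩

/-- The `e`-portals of the induced subgraph on `V`: connected components of `portalLineGraph`. -/
abbrev Portal (V : Set (ℤ × ℤ)) (e : ℤ × ℤ) := (portalLineGraph V e).ConnectedComponent

/-- The portal containing a given vertex. -/
def portalMk (V : Set (ℤ × ℤ)) (e : ℤ × ℤ) (u : V) : Portal V e :=
  (portalLineGraph V e).connectedComponentMk u

/-- The `e`-portal graph: vertices are the `e`-portals, two portals being adjacent iff
some edge of the induced grid graph joins them. -/
def portalGraph (V : Set (ℤ × ℤ)) (e : ℤ × ℤ) : SimpleGraph (Portal V e) where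
  Adj P Q := P ≠ Q ∧ ∃ u v : V, (triGrid.induce V).Adj u v ∧
    portalMk V e u = P ∧ portalMk V e v = Q
  symm := ⟨fun P Q ⟨hne, u, v, h, hu, hv⟩ => ⟨hne.symm, v, u, h.symm, hv, hu⟩⟩
  loopless := ⟨fun P h => h.1 rfl⟩

/-- Distance between the portals of `u` and `v` in the `e`-portal graph. -/
noncomputable def portalDist (V : Set (ℤ × ℤ)) (e : ℤ × ℤ) (u v : V) : ℕ :=
  (portalGraph V e).dist (portalMk V e u) (portalMk V e v)

/-- A set `P` is an `e`-portal of the induced subgraph on `V` (as a set of grid points). -/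
def IsPortal (V : Set (ℤ × ℤ)) (e : ℤ × ℤ) (P : Set (ℤ × ℤ)) : Prop :=
  ∃ C : Portal V e, P = Subtype.val '' C.supp

/-- `R` is geodesically convex in the subgraph induced on `V`: for all `u, v ∈ R`,
every shortest `u`–`v` path in the induced graph stays inside `R`. -/
def GeodesicallyConvex (V R : Set (ℤ × ℤ)) : Prop :=
  ∀ u v : V, (u : ℤ × ℤ) ∈ R → (v : ℤ × ℤ) ∈ R →
    ∀ p : (triGrid.induce V).Walk u v, p.length = (triGrid.induce V).dist u v →
      ∀ w ∈ p.support, (w : ℤ × ℤ) ∈ R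


section PortalEx

variable {M : Set (ℤ × ℤ)}

lemma line_adj_coords {u v : ↥M} (h : (portalLineGraph M (1,0)).Adj u v) :
    u.val.2 = v.val.2 ∧ (u.val.1 = v.val.1 + 1 ∨ v.val.1 = u.val.1 + 1) := by
  obtain ⟨-, h2⟩ := h
  rcases h2 with h2 | h2 <;>
    (have h1 := congrArg Prod.fst h2; have h3 := congrArg Prod.snd h2;
     simp only [Prod.fst_sub, Prod.snd_sub] at h1 h3; constructor <;> omega)

lemma lineWalk_row {u v : ↥M} (w : (portalLineGraph M (1,0)).Walk u v) :
    u.val.2 = v.val.2 := by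
  induction w with
  | nil => rfl
  | cons h _ ih => rw [(line_adj_coords h).1, ih]

lemma portalMk_row_eq {u v : ↥M} (h : portalMk M (1,0) u = portalMk M (1,0) v) :
    u.val.2 = v.val.2 :=
  (SimpleGraph.ConnectedComponent.exact h).elim fun w => lineWalk_row w

def prow (P : Portal M (1,0)) : ℤ :=
  P.lift (fun u => u.val.2) (fun _ _ p _ => lineWalk_row p)

lemma prow_mk (u : ↥M) : prow (portalMk M (1,0) u) = u.val.2 :=
  SimpleGraph.ConnectedComponent.lift_mk

lemma portalMk_eq_of_mem_support {u v : ↥M} (w : (portalLineGraph M (1,0)).Walk u v)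
    {m : ↥M} (hm : m ∈ w.support) : portalMk M (1,0) u = portalMk M (1,0) m := by
  classical
  exact SimpleGraph.ConnectedComponent.sound ⟨w.takeUntil m hm⟩

lemma portal_intermediate {u v : ↥M} (w : (portalLineGraph M (1,0)).Walk u v) (c : ℤ)
    (h1 : min u.val.1 v.val.1 ≤ c) (h2 : c ≤ max u.val.1 v.val.1) :
    ∃ m : ↥M, m ∈ w.support ∧ m.val.1 = c := by
  induction w with
  | nil =>
    rename_i a
    exact ⟨a, by simp, by omega⟩
  | @cons a b c' h q ih =>
    by_cases hc : min b.val.1 c'.val.1 ≤ c ∧ c ≤ max b.val.1 c'.val.1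
    · obtain ⟨m, hm, hmc⟩ := ih hc.1 hc.2
      exact ⟨m, by simp [Walk.support_cons]; right; exact hm, hmc⟩
    · have hl := (line_adj_coords h).2
      push_neg at hc
      refine ⟨a, by simp [Walk.support_cons], by omega⟩

lemma portalMk_eq_of_horiz {u v : ↥M} (hadj : triGrid.Adj u.val v.val)
    (hrow : u.val.2 = v.val.2) : portalMk M (1,0) u = portalMk M (1,0) v := by
  have hc := triGrid_adj_coords hadj
  have hor : u.val - v.val = ((1:ℤ),(0:ℤ)) ∨ v.val - u.val = ((1:ℤ),(0:ℤ)) := by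
    rcases hc with ⟨a,b⟩|⟨a,b⟩|⟨a,b⟩|⟨a,b⟩|⟨a,b⟩|⟨a,b⟩
    · left; rw [Prod.ext_iff]; simp only [Prod.fst_sub, Prod.snd_sub]; omega
    · right; rw [Prod.ext_iff]; simp only [Prod.fst_sub, Prod.snd_sub]; omega
    all_goals (exact absurd hrow (by omega))
  exact SimpleGraph.ConnectedComponent.sound ⟨Walk.cons ⟨hadj, hor⟩ Walk.nil⟩

lemma portal_adj_rows {P Q : Portal M (1,0)} (h : (portalGraph M (1,0)).Adj P Q) :
    prow P = prow Q + 1 ∨ prow Q = prow P + 1 := by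
  obtain ⟨hne, u, v, hadj, hu, hv⟩ := h
  have hadj' : triGrid.Adj u.val v.val := hadj
  by_cases hrow : u.val.2 = v.val.2
  · exact absurd (hu ▸ hv ▸ portalMk_eq_of_horiz hadj' hrow) hne
  · have hc := triGrid_adj_coords hadj'
    rw [← hu, ← hv, prow_mk, prow_mk]
    omega

lemma exists_rmax (hfin : M.Finite) (P : Portal M (1,0)) :
    ∃ m : ↥M, portalMk M (1,0) m = P ∧ ∀ u : ↥M, portalMk M (1,0) u = P → u.val.1 ≤ m.val.1 := by
  have : Finite ↥M := hfin.to_subtype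
  obtain ⟨u0, hu0⟩ := P.exists_rep
  have hne : ({u : ↥M | portalMk M (1,0) u = P} : Set ↥M).Nonempty := ⟨u0, hu0⟩
  obtain ⟨m, hm, hmax⟩ := Set.exists_max_image _ (fun u : ↥M => u.val.1) (Set.toFinite _) hne
  exact ⟨m, hm, fun u hu => hmax u hu⟩

lemma exists_lmin (hfin : M.Finite) (P : Portal M (1,0)) :
    ∃ m : ↥M, portalMk M (1,0) m = P ∧ ∀ u : ↥M, portalMk M (1,0) u = P → m.val.1 ≤ u.val.1 := by
  have : Finite ↥M := hfin.to_subtype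
  obtain ⟨u0, hu0⟩ := P.exists_rep
  have hne : ({u : ↥M | portalMk M (1,0) u = P} : Set ↥M).Nonempty := ⟨u0, hu0⟩
  obtain ⟨m, hm, hmax⟩ := Set.exists_max_image _ (fun u : ↥M => -u.val.1) (Set.toFinite _) hne
  refine ⟨m, hm, fun u hu => by have := hmax u hu; omega⟩

end PortalEx

lemma chi_zero_horiz {z u v : ℤ × ℤ} (h : u.2 = v.2) : chi z u v = 0 := by
  simp only [chi]; split_ifs <;> omega

section Realize

variable {M : Set (ℤ × ℤ)}

/-- a chosen grid edge witnessing a portal-graph adjacency -/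
noncomputable def epick {P Q : Portal M (1,0)} (h : (portalGraph M (1,0)).Adj P Q) : ↥M × ↥M :=
  ⟨h.2.choose, h.2.choose_spec.choose⟩

lemma epick_spec {P Q : Portal M (1,0)} (h : (portalGraph M (1,0)).Adj P Q) :
    triGrid.Adj (epick h).1.val (epick h).2.val ∧
    portalMk M (1,0) (epick h).1 = P ∧ portalMk M (1,0) (epick h).2 = Q := by
  obtain ⟨h1, h2, h3⟩ := h.2.choose_spec.choose_spec
  exact ⟨h1, h2, h3⟩

noncomputable def windP (z : ℤ × ℤ) :
    ∀ {P Q : Portal M (1,0)}, (portalGraph M (1,0)).Walk P Q → ℤ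
  | _, _, .nil => 0
  | _, _, .cons h w => chi z (epick h).1.val (epick h).2.val + windP z w

/-- the hom from the line graph into the ambient grid -/
@[reducible] def lineToGrid (M : Set (ℤ × ℤ)) : portalLineGraph M (1,0) →g triGrid :=
  ⟨Subtype.val, fun h => h.1⟩

lemma wind_line_zero (z : ℤ × ℤ) {u v : ↥M} (lw : (portalLineGraph M (1,0)).Walk u v) :
    wind z (lw.map (lineToGrid M)) = 0 := by
  induction lw with
  | nil => simp [wind]
  | cons h q ih =>
    rw [Walk.map_cons, wind_cons, ih]
    have : chi z ((lineToGrid M) _) ((lineToGrid M) _) = 0 := chi_zero_horiz (line_adj_coords h).1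
    rw [this]; ring

lemma realize {P Q : Portal M (1,0)} (w : (portalGraph M (1,0)).Walk P Q) :
    ∀ (u v : ↥M), portalMk M (1,0) u = P → portalMk M (1,0) v = Q →
    ∃ W : triGrid.Walk u.val v.val, (∀ x ∈ W.support, x ∈ M) ∧ ∀ z, wind z W = windP z w := by
  induction w with
  | nil =>
    intro u v hu hv
    obtain ⟨lw⟩ := SimpleGraph.ConnectedComponent.exact (hu.trans hv.symm)
    refine ⟨lw.map (lineToGrid M), ?_, fun z => ?_⟩
    · intro x hx
      rw [Walk.support_map] at hx
      obtain ⟨y, _, rfl⟩ := List.mem_map.mp hx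
      exact y.2
    · rw [wind_line_zero]; rfl
  | @cons P P' Q h w' ih =>
    intro u v hu hv
    have hsp := epick_spec h
    obtain ⟨lw⟩ := SimpleGraph.ConnectedComponent.exact (hu.trans hsp.2.1.symm)
    obtain ⟨W', hW's, hW'w⟩ := ih (epick h).2 v hsp.2.2 hv
    refine ⟨(lw.map (lineToGrid M)).append (Walk.cons hsp.1 W'), ?_, fun z => ?_⟩
    · intro x hx
      rw [Walk.support_append] at hx
      rcases List.mem_append.mp hx with hx | hx
      · rw [Walk.support_map] at hx
        obtain ⟨y, _, rfl⟩ := List.mem_map.mp hx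
        exact y.2
      · have : x ∈ (Walk.cons hsp.1 W').support := List.mem_of_mem_tail hx
        rw [Walk.support_cons] at this
        rcases List.mem_cons.mp this with rfl | hx'
        · exact (epick h).1.2
        · exact hW's x hx'
    · rw [wind_append, wind_line_zero, wind_cons, hW'w]
      show 0 + (chi z (epick h).1.val (epick h).2.val + windP z w') = _
      rw [windP]
      ring

end Realize

section Acyclic

variable {M : Set (ℤ × ℤ)}

lemma abs_dx_le_one {u v : ℤ × ℤ} (h : triGrid.Adj u v) :
    u.1 ≤ v.1 + 1 ∧ v.1 ≤ u.1 + 1 := by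
  have := triGrid_adj_coords h; omega

/-- two distinct portals in the same row are separated by at least one missing point -/
lemma portal_separation {D D' : Portal M (1,0)} (hne : D ≠ D')
    (hrow : prow D = prow D') (m : ↥M) (hm : portalMk M (1,0) m = D)
    (hmax : ∀ u : ↥M, portalMk M (1,0) u = D → u.val.1 ≤ m.val.1)
    (m' : ↥M) (hm' : portalMk M (1,0) m' = D')
    (hlt : m.val.1 < m'.val.1) :
    ∀ u : ↥M, portalMk M (1,0) u = D' → m.val.1 + 2 ≤ u.val.1 := by
  intro u hu
  by_contra hcon
  push_neg at hcon
  obtain ⟨lw⟩ := SimpleGraph.ConnectedComponent.exact (hu.trans hm'.symm)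
  obtain ⟨mm, hmm_mem, hmm1⟩ := portal_intermediate lw (m.val.1 + 1) (by omega) (by omega)
  have hmmD' : portalMk M (1,0) mm = D' := by
    rw [← portalMk_eq_of_mem_support lw hmm_mem, hu]
  have hrow_mm : mm.val.2 = m.val.2 := by
    have h1 : prow (portalMk M (1,0) mm) = mm.val.2 := prow_mk _
    have h2 : prow (portalMk M (1,0) m) = m.val.2 := prow_mk _
    rw [hmmD'] at h1; rw [hm] at h2
    omega
  have hadj : triGrid.Adj mm.val m.val := by
    left
    rw [Prod.ext_iff]
    simp only [Prod.fst_sub, Prod.snd_sub]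
    constructor <;> omega
  have := portalMk_eq_of_horiz hadj hrow_mm
  rw [hmmD', hm] at this
  exact hne this.symm

/-- a "good" portal for the cycle analysis -/
def GoodP (M : Set (ℤ × ℤ)) (Pstar : Portal M (1,0)) (ystar lend : ℤ)
    (X : Portal M (1,0)) : Prop :=
  prow X ≤ ystar ∧ (prow X = ystar → X = Pstar ∨
    ∀ u : ↥M, portalMk M (1,0) u = X → u.val.1 + 2 ≤ lend)

lemma chi_edge_zero {Pstar : Portal M (1,0)} {ystar lend : ℤ} {z : ℤ × ℤ}
    (hz2 : z.2 = ystar - 1) (hzc : lend ≤ z.1)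
    {X Y : Portal M (1,0)} (hX : GoodP M Pstar ystar lend X) (hY : GoodP M Pstar ystar lend Y)
    (hXne : X ≠ Pstar) (hYne : Y ≠ Pstar)
    {s t : ↥M} (hs : portalMk M (1,0) s = X) (ht : portalMk M (1,0) t = Y)
    (hadj : triGrid.Adj s.val t.val) :
    chi z s.val t.val = 0 := by
  have hdx := abs_dx_le_one hadj
  have hsrow : s.val.2 = prow X := by rw [← hs, prow_mk]
  have htrow : t.val.2 = prow Y := by rw [← ht, prow_mk]
  have hXb : prow X = ystar → ∀ u : ↥M, portalMk M (1,0) u = X → u.val.1 + 2 ≤ lend :=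
    fun h => (hX.2 h).resolve_left hXne
  have hYb : prow Y = ystar → ∀ u : ↥M, portalMk M (1,0) u = Y → u.val.1 + 2 ≤ lend :=
    fun h => (hY.2 h).resolve_left hYne
  have hXle := hX.1
  have hYle := hY.1
  have hsb : s.val.2 = ystar → s.val.1 + 2 ≤ lend := fun h => hXb (by omega) s hs
  have htb : t.val.2 = ystar → t.val.1 + 2 ≤ lend := fun h => hYb (by omega) t ht
  simp only [chi]
  split_ifs with h1 h2
  · exfalso
    obtain ⟨e1, e2, e3⟩ := h1
    have : t.val.2 = ystar := by omega
    have := htb this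
    omega
  · exfalso
    obtain ⟨e1, e2, e3⟩ := h2
    have : s.val.2 = ystar := by omega
    have := hsb this
    omega
  · rfl

lemma windP_last {ystar lend : ℤ} :
    ∀ {R Pend : Portal M (1,0)} (q : (portalGraph M (1,0)).Walk R Pend),
    prow Pend = ystar →
    (∀ X ∈ q.support, GoodP M Pend ystar lend X) →
    (∀ X ∈ q.support.dropLast, X ≠ Pend) →
    R ≠ Pend →
    ∃ s t : ↥M, triGrid.Adj s.val t.val ∧ portalMk M (1,0) t = Pend ∧
      portalMk M (1,0) s ≠ Pend ∧ s.val.2 = ystar - 1 ∧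
      (∃ i, q.support[i]? = some (portalMk M (1,0) s) ∧ i + 2 = q.support.length) ∧
      ∀ z : ℤ × ℤ, z.2 = ystar - 1 → lend ≤ z.1 →
        windP z q = (if z.1 < s.val.1 then 1 else 0) := by
  intro R Pend q
  induction q with
  | nil => intro _ _ _ hR; exact absurd rfl hR
  | @cons A B C h q' ih =>
    intro hrowP hsupp hdrop hR
    cases q' with
    | nil =>
      -- single edge A → C
      have hsp := epick_spec h
      have hs2 : (epick h).1.val.2 = ystar - 1 := by
        have hrr := portal_adj_rows h
        have hRle : prow A ≤ ystar := (hsupp A (by simp [Walk.support_cons])).1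
        have := prow_mk (M := M) (epick h).1
        rw [hsp.2.1] at this
        omega
      have ht2 : (epick h).2.val.2 = ystar := by
        have := prow_mk (M := M) (epick h).2
        rw [hsp.2.2] at this
        omega
      refine ⟨(epick h).1, (epick h).2, hsp.1, hsp.2.2, by rw [hsp.2.1]; exact hR, hs2,
        ⟨0, ?_, ?_⟩, ?_⟩
      · simp [Walk.support_cons, Walk.support_nil, hsp.2.1]
      · simp [Walk.support_cons, Walk.support_nil]
      · intro z hz2 hzc
        show chi z (epick h).1.val (epick h).2.val + windP z Walk.nil = _
        show chi z (epick h).1.val (epick h).2.val + 0 = _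
        simp only [chi]
        split_ifs <;> omega
    | cons h' q'' =>
      have hsupR : A ∈ (Walk.cons h (Walk.cons h' q'')).support := by simp [Walk.support_cons]
      have hsupR' : B ∈ (Walk.cons h (Walk.cons h' q'')).support := by
        simp [Walk.support_cons]
      have hdropR' : B ≠ C := by
        apply hdrop
        rw [Walk.support_cons]
        have hne : (Walk.cons h' q'').support ≠ [] := Walk.support_ne_nil _
        rw [List.dropLast_cons_of_ne_nil hne, Walk.support_cons]
        have hne2 : q''.support ≠ [] := Walk.support_ne_nil _
        rw [List.dropLast_cons_of_ne_nil hne2]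
        simp
      obtain ⟨s, t, a1, a2, a3, a4, ⟨i, hi, hilen⟩, a6⟩ := ih hrowP
        (fun X hX => hsupp X (by rw [Walk.support_cons]; exact List.mem_cons_of_mem _ hX))
        (fun X hX => hdrop X (by
          rw [Walk.support_cons]
          have hne : (Walk.cons h' q'').support ≠ [] := Walk.support_ne_nil _
          rw [List.dropLast_cons_of_ne_nil hne]
          exact List.mem_cons_of_mem _ hX))
        hdropR'
      refine ⟨s, t, a1, a2, a3, a4, ⟨i + 1, ?_, ?_⟩, ?_⟩
      · rw [Walk.support_cons, List.getElem?_cons_succ]; exact hi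
      · rw [Walk.support_cons, List.length_cons]; omega
      · intro z hz2 hzc
        show chi z (epick h).1.val (epick h).2.val + windP z (Walk.cons h' q'') = _
        have hsp := epick_spec h
        have h0 : chi z (epick h).1.val (epick h).2.val = 0 := by
          exact chi_edge_zero hz2 hzc
            (hsupp A hsupR) (hsupp B hsupR') hR hdropR' hsp.2.1 hsp.2.2 hsp.1
        rw [h0, a6 z hz2 hzc]
        ring

lemma list_argmax {α : Type*} (l : List α) (hl : l ≠ []) (f : α → ℤ) :
    ∃ a ∈ l, ∀ b ∈ l, f b ≤ f a := by
  induction l with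
  | nil => exact absurd rfl hl
  | cons a l ih =>
    rcases eq_or_ne l [] with rfl | hlne
    · exact ⟨a, by simp, by simp⟩
    · obtain ⟨m, hm, hmax⟩ := ih hlne
      rcases le_or_gt (f m) (f a) with hle | hlt
      · refine ⟨a, by simp, ?_⟩
        intro b hb
        rcases List.mem_cons.mp hb with rfl | hb
        · exact le_refl _
        · exact le_trans (hmax b hb) hle
      · refine ⟨m, by simp [hm], ?_⟩
        intro b hb
        rcases List.mem_cons.mp hb with rfl | hb
        · omega
        · exact hmax b hb

theorem acyclic_ex {M : Set (ℤ × ℤ)} (hfin : M.Finite) (hsimple : HoleFree M) :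
    (portalGraph M (1,0)).IsAcyclic := by
  classical
  intro V0 c hc
  choose rv hrv1 hrv2 using fun P => exists_rmax (M := M) hfin P
  choose lv hlv1 hlv2 using fun P => exists_lmin (M := M) hfin P
  obtain ⟨P1, hP1m, hP1max⟩ := list_argmax c.support (Walk.support_ne_nil _) prow
  set ystar := prow P1 with hystar
  have hP1l2 : P1 ∈ c.support.filter (fun P => decide (prow P = ystar)) := by
    rw [List.mem_filter]; exact ⟨hP1m, by simp [hystar]⟩
  obtain ⟨Pstar, hPsl2, hPsmax'⟩ :=
    list_argmax _ (List.ne_nil_of_mem hP1l2) (fun P => (rv P).val.1)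
  rw [List.mem_filter] at hPsl2
  have hPsm : Pstar ∈ c.support := hPsl2.1
  have hPsrow : prow Pstar = ystar := by simpa using hPsl2.2
  have hPsmax : ∀ X ∈ c.support, prow X = ystar → (rv X).val.1 ≤ (rv Pstar).val.1 := by
    intro X hX hXr
    exact hPsmax' X (by rw [List.mem_filter]; exact ⟨hX, by simpa⟩)
  set lend := (lv Pstar).val.1 with hlenddef
  have hrow_rv : ∀ P : Portal M (1,0), (rv P).val.2 = prow P := by
    intro P; rw [← prow_mk (rv P), hrv1]
  have hgoodsup : ∀ X ∈ c.support, GoodP M Pstar ystar lend X := by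
    intro X hX
    refine ⟨hP1max X hX, fun hXrow => ?_⟩
    by_cases hXP : X = Pstar
    · exact Or.inl hXP
    right
    have h1 := hPsmax X hX hXrow
    have hne' : (rv X).val.1 ≠ (rv Pstar).val.1 := by
      intro heq
      apply hXP
      have hrows : (rv X).val.2 = (rv Pstar).val.2 := by
        rw [hrow_rv, hrow_rv, hXrow, hPsrow]
      have hsame : rv X = rv Pstar := Subtype.ext (Prod.ext heq hrows)
      rw [← hrv1 X, hsame, hrv1]
    have hsep := portal_separation hXP (by rw [hXrow, hPsrow]) (rv X) (hrv1 X) (hrv2 X)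
      (rv Pstar) (hrv1 Pstar) (by omega)
    have h2 := hsep (lv Pstar) (hlv1 Pstar)
    intro u hu
    have := hrv2 X u hu
    omega
  obtain ⟨c', hc', hrotmem⟩ : ∃ c' : (portalGraph M (1,0)).Walk Pstar Pstar,
      c'.IsCycle ∧ ∀ X ∈ c'.support, X ∈ c.support := by
    refine ⟨c.rotate Pstar hPsm, hc.rotate hPsm, ?_⟩
    intro X hX
    rw [Walk.support_eq_cons] at hX
    rcases List.mem_cons.mp hX with rfl | hX
    · exact hPsm
    · exact List.mem_of_mem_tail ((Walk.support_rotate c Pstar hPsm).mem_iff.mp hX)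
  cases c' with
  | nil => simpa using hc'.three_le_length
  | cons h₁ q =>
    rename_i B
    have hq_nodup : q.support.Nodup := by
      have h := hc'.support_nodup
      rwa [Walk.support_cons, List.tail_cons] at h
    have hlen3 := hc'.three_le_length
    rw [Walk.length_cons] at hlen3
    have hB_mem_q : B ∈ q.support := Walk.start_mem_support q
    have hBmem : B ∈ c.support :=
      hrotmem B (by rw [Walk.support_cons]; exact List.mem_cons_of_mem _ hB_mem_q)
    have hPsB : Pstar ≠ B := h₁.1
    have hBrow : prow B = ystar - 1 := by
      have hadjr := portal_adj_rows h₁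
      have hle := (hgoodsup B hBmem).1
      omega
    have hdropq : ∀ X ∈ q.support.dropLast, X ≠ Pstar := by
      have hlast : q.support.getLast (Walk.support_ne_nil q) = Pstar := Walk.getLast_support q
      have hsplit := List.dropLast_append_getLast (Walk.support_ne_nil q)
      intro X hX hXP
      rw [← hsplit] at hq_nodup
      have hdisj := (List.nodup_append'.mp hq_nodup).2.2
      exact hdisj hX (by rw [hlast]; simp [hXP])
    have hgoodq : ∀ X ∈ q.support, GoodP M Pstar ystar lend X := by
      intro X hX
      exact hgoodsup X (hrotmem X (by rw [Walk.support_cons]; exact List.mem_cons_of_mem _ hX))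
    obtain ⟨s, t, ha1, ha2, ha3, ha4, ⟨i, hi, hilen⟩, hwind⟩ :=
      windP_last q hPsrow hgoodq hdropq (Ne.symm hPsB)
    have hD2row : prow (portalMk M (1,0) s) = ystar - 1 := by rw [prow_mk]; omega
    have hD2B : portalMk M (1,0) s ≠ B := by
      intro heq
      have h0 : q.support[0]? = some B := by rw [Walk.support_eq_cons]; rfl
      have hlenq : q.support.length = q.length + 1 := Walk.length_support q
      have hne := List.nodup_iff_getElem?_ne_getElem?.mp hq_nodup 0 i (by omega) (by omega)
      rw [h0, hi, heq] at hne
      exact hne rfl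
    have hsp := epick_spec h₁
    have he1row : (epick h₁).1.val.2 = ystar := by
      have := prow_mk (M := M) (epick h₁).1; rw [hsp.2.1] at this; omega
    have he2row : (epick h₁).2.val.2 = ystar - 1 := by
      have h2 := prow_mk (M := M) (epick h₁).2; rw [hsp.2.2] at h2; omega
    have he2x : (epick h₁).1.val.1 ≤ (epick h₁).2.val.1 := by
      have := triGrid_adj_coords hsp.1; omega
    have he1lend : lend ≤ (epick h₁).1.val.1 := hlv2 Pstar (epick h₁).1 hsp.2.1
    have htrow : t.val.2 = ystar := by
      have := prow_mk (M := M) t; rw [ha2] at this; omega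
    have hsx : t.val.1 ≤ s.val.1 := by
      have := triGrid_adj_coords ha1; omega
    have htlend : lend ≤ t.val.1 := hlv2 Pstar t ha2
    have hr1 : lend ≤ (rv B).val.1 := le_trans (by omega) (hrv2 B (epick h₁).2 hsp.2.2)
    have hr2 : lend ≤ (rv (portalMk M (1,0) s)).val.1 :=
      le_trans (by omega) (hrv2 (portalMk M (1,0) s) s rfl)
    have hrvBrow : (rv B).val.2 = ystar - 1 := by rw [hrow_rv]; omega
    have hrvD2row : (rv (portalMk M (1,0) s)).val.2 = ystar - 1 := by rw [hrow_rv]; omega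
    have hrneq : (rv B).val.1 ≠ (rv (portalMk M (1,0) s)).val.1 := by
      intro heq
      apply hD2B
      have hsame : rv (portalMk M (1,0) s) = rv B :=
        Subtype.ext (Prod.ext heq.symm (by omega))
      rw [← hrv1 (portalMk M (1,0) s), hsame, hrv1]
    set zz : ℤ × ℤ := (min (rv B).val.1 (rv (portalMk M (1,0) s)).val.1 + 1, ystar - 1)
      with hzzdef
    have hzz2 : zz.2 = ystar - 1 := rfl
    have hzz1 : zz.1 = min (rv B).val.1 (rv (portalMk M (1,0) s)).val.1 + 1 := rfl
    have hzzc : lend ≤ zz.1 := by rw [hzz1]; omega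
    have hzznm : zz ∉ M := by
      intro hzm
      rcases le_or_gt (rv B).val.1 (rv (portalMk M (1,0) s)).val.1 with hcase | hcase
      · have hadj : triGrid.Adj zz (rv B).val := by
          left; rw [Prod.ext_iff]; simp only [Prod.fst_sub, Prod.snd_sub]
          constructor
          · omega
          · omega
        have hmm := portalMk_eq_of_horiz (u := ⟨zz, hzm⟩) (v := rv B) hadj (by rw [hzz2]; omega)
        rw [hrv1] at hmm
        have := hrv2 B ⟨zz, hzm⟩ hmm
        rw [show (⟨zz, hzm⟩ : ↥M).val.1 = zz.1 from rfl, hzz1] at this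
        omega
      · have hadj : triGrid.Adj zz (rv (portalMk M (1,0) s)).val := by
          left; rw [Prod.ext_iff]; simp only [Prod.fst_sub, Prod.snd_sub]
          constructor
          · omega
          · omega
        have hmm := portalMk_eq_of_horiz (u := ⟨zz, hzm⟩) (v := rv (portalMk M (1,0) s)) hadj
          (by rw [hzz2]; omega)
        rw [hrv1] at hmm
        have := hrv2 (portalMk M (1,0) s) ⟨zz, hzm⟩ hmm
        rw [show (⟨zz, hzm⟩ : ↥M).val.1 = zz.1 from rfl, hzz1] at this
        omega
    obtain ⟨W, hWs, hWw⟩ := realize (Walk.cons h₁ q) (rv Pstar) (rv Pstar) (hrv1 _) (hrv1 _)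
    have hW0 := wind_closed_eq_zero hfin hsimple W hWs hzznm
    have hWval : wind zz W = windP zz (Walk.cons h₁ q) := hWw zz
    have hq_wind := hwind zz hzz2 hzzc
    have hchi1 : chi zz (epick h₁).1.val (epick h₁).2.val =
        -(if zz.1 < (epick h₁).2.val.1 then 1 else 0) := by
      simp only [chi]; split_ifs <;> omega
    have hwindPc : windP zz (Walk.cons h₁ q) =
        chi zz (epick h₁).1.val (epick h₁).2.val + windP zz q := rfl
    have hzero : (-(if zz.1 < (epick h₁).2.val.1 then (1:ℤ) else 0)) +
        (if zz.1 < s.val.1 then 1 else 0) = 0 := by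
      rw [hWval, hwindPc, hchi1, hq_wind] at hW0; exact hW0
    rcases lt_or_gt_of_ne hrneq with hlt | hlt
    · have hs_sep := portal_separation (Ne.symm hD2B) (by omega) (rv B) (hrv1 B) (hrv2 B)
        (rv (portalMk M (1,0) s)) (hrv1 _) hlt
      have hs1 := hs_sep s rfl
      have he2b := hrv2 B (epick h₁).2 hsp.2.2
      rw [hzz1] at hzero
      split_ifs at hzero <;> omega
    · have hs_sep := portal_separation hD2B (by omega) (rv (portalMk M (1,0) s)) (hrv1 _)
        (hrv2 _) (rv B) (hrv1 B) hlt
      have he2b := hs_sep (epick h₁).2 hsp.2.2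
      have hs1 := hrv2 (portalMk M (1,0) s) s rfl
      rw [hzz1] at hzero
      split_ifs at hzero <;> omega

end Acyclic

section Phase1

variable {M : Set (ℤ × ℤ)} {e : ℤ × ℤ}

lemma toPortalWalk {u v : ↥M} (p : (triGrid.induce M).Walk u v) :
    ∃ q : (portalGraph M e).Walk (portalMk M e u) (portalMk M e v),
      ∀ P ∈ q.support, ∃ w ∈ p.support, portalMk M e w = P := by
  induction p with
  | nil =>
    refine ⟨Walk.nil, ?_⟩
    intro P hP
    rw [Walk.support_nil, List.mem_singleton] at hP
    exact ⟨_, by simp, hP.symm⟩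
  | @cons a b c h p' ih =>
    obtain ⟨q', hq'⟩ := ih
    by_cases heq : portalMk M e a = portalMk M e b
    · refine ⟨q'.copy heq.symm rfl, ?_⟩
      intro P hP
      rw [Walk.support_copy] at hP
      obtain ⟨w, hw, hwP⟩ := hq' P hP
      exact ⟨w, by rw [Walk.support_cons]; exact List.mem_cons_of_mem _ hw, hwP⟩
    · refine ⟨Walk.cons (show (portalGraph M e).Adj _ _ from ⟨heq, a, b, h, rfl, rfl⟩) q', ?_⟩
      intro P hP
      rw [Walk.support_cons] at hP
      rcases List.mem_cons.mp hP with rfl | hP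
      · exact ⟨a, by simp [Walk.support_cons], rfl⟩
      · obtain ⟨w, hw, hwP⟩ := hq' P hP
        exact ⟨w, by rw [Walk.support_cons]; exact List.mem_cons_of_mem _ hw, hwP⟩

lemma portalGraph_connected (hconn : (triGrid.induce M).Connected) :
    (portalGraph M e).Connected := by
  haveI hne : Nonempty ↥M := hconn.nonempty
  haveI : Nonempty (Portal M e) := ⟨portalMk M e (Classical.arbitrary _)⟩
  apply SimpleGraph.Connected.mk
  · intro P Q
    obtain ⟨u, rfl⟩ := P.exists_rep
    obtain ⟨v, rfl⟩ := Q.exists_rep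
    refine (hconn u v).elim fun p => ?_
    obtain ⟨q, -⟩ := toPortalWalk (e := e) p
    exact ⟨q⟩

lemma getVert_mem_support {α : Type*} {G : SimpleGraph α} {u v : α} (w : G.Walk u v) (k : ℕ) :
    w.getVert k ∈ w.support := by
  induction w generalizing k with
  | nil => simp [Walk.getVert]
  | cons h p ih =>
    cases k with
    | zero => simp [Walk.getVert_zero]
    | succ k =>
      rw [Walk.getVert_cons_succ, Walk.support_cons]
      exact List.mem_cons_of_mem _ (ih k)

lemma dist_getVert_le {α : Type*} {G : SimpleGraph α} (hconn : G.Connected) {A B : α}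
    (w : G.Walk A B) (k : ℕ) : G.dist A (w.getVert k) ≤ k := by
  induction w generalizing k with
  | nil => simp [Walk.getVert, SimpleGraph.dist_self]
  | @cons a b c h p ih =>
    cases k with
    | zero => simp [Walk.getVert_zero]
    | succ k =>
      rw [Walk.getVert_cons_succ]
      calc G.dist a (p.getVert k) ≤ G.dist a b + G.dist b (p.getVert k) := hconn.dist_triangle
        _ ≤ 1 + k := by
            have h1 : G.dist a b ≤ 1 := by
              have := SimpleGraph.dist_le (Walk.cons h Walk.nil)
              simpa using this
            have h2 := ih k
            omega
        _ = k + 1 := by omega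

lemma dist_getVert_end_le {α : Type*} {G : SimpleGraph α} {A B : α}
    (w : G.Walk A B) (k : ℕ) (hk : k ≤ w.length) : G.dist (w.getVert k) B ≤ w.length - k := by
  induction w generalizing k with
  | nil => simp [Walk.getVert]
  | @cons a b c h p ih =>
    cases k with
    | zero =>
      rw [Walk.getVert_zero]
      have := SimpleGraph.dist_le (Walk.cons h p)
      omega
    | succ k =>
      rw [Walk.getVert_cons_succ]
      rw [Walk.length_cons] at hk
      have := ih k (by omega)
      rw [Walk.length_cons]
      omega

lemma exists_middle {α : Type*} {G : SimpleGraph α} (hconn : G.Connected) (A B : α) (k : ℕ)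
    (hk : k ≤ G.dist A B) : ∃ m : α, G.dist A m = k ∧ G.dist m B = G.dist A B - k := by
  obtain ⟨w, hw⟩ := hconn.exists_walk_length_eq_dist A B
  refine ⟨w.getVert k, ?_, ?_⟩
  · have h1 := dist_getVert_le hconn w k
    have h2 := dist_getVert_end_le w k (by omega)
    have h3 := hconn.dist_triangle (u := A) (v := w.getVert k) (w := B)
    omega
  · have h1 := dist_getVert_le hconn w k
    have h2 := dist_getVert_end_le w k (by omega)
    have h3 := hconn.dist_triangle (u := A) (v := w.getVert k) (w := B)
    omega

lemma walk_through_middle {α : Type*} {G : SimpleGraph α} (hconn : G.Connected)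
    (hacyc : G.IsAcyclic) {A B m : α} (hm1 : G.dist A m + G.dist m B = G.dist A B)
    (q : G.Walk A B) : m ∈ q.support := by
  classical
  obtain ⟨p₁, hp₁⟩ := hconn.exists_walk_length_eq_dist A m
  obtain ⟨p₂, hp₂⟩ := hconn.exists_walk_length_eq_dist m B
  set P₁ := p₁.bypass with hP₁
  set P₂ := p₂.bypass with hP₂
  have hP₁len : P₁.length = G.dist A m := le_antisymm
    (by rw [hP₁, ← hp₁]; exact Walk.length_bypass_le p₁) (SimpleGraph.dist_le P₁)
  have hP₂len : P₂.length = G.dist m B := le_antisymm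
    (by rw [hP₂, ← hp₂]; exact Walk.length_bypass_le p₂) (SimpleGraph.dist_le P₂)
  have hdisj : ∀ x, x ∈ P₁.support → x ∈ P₂.support → x = m := by
    intro x hx1 hx2
    have ht1 := Walk.take_spec P₁ hx1
    have ht2 := Walk.take_spec P₂ hx2
    have hl1 : (P₁.takeUntil x hx1).length + (P₁.dropUntil x hx1).length = G.dist A m := by
      rw [← hP₁len, ← Walk.length_append, ht1]
    have hl2 : (P₂.takeUntil x hx2).length + (P₂.dropUntil x hx2).length = G.dist m B := by
      rw [← hP₂len, ← Walk.length_append, ht2]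
    have hd1 : G.dist A x ≤ (P₁.takeUntil x hx1).length := SimpleGraph.dist_le _
    have hd2 : G.dist x B ≤ (P₂.dropUntil x hx2).length := SimpleGraph.dist_le _
    have htri : G.dist A B ≤ G.dist A x + G.dist x B := hconn.dist_triangle
    have hz : (P₁.dropUntil x hx1).length = 0 ∧ (P₂.takeUntil x hx2).length = 0 := by omega
    exact (Walk.eq_of_length_eq_zero hz.2).symm
  have hrpath : (P₁.append P₂).IsPath := by
    rw [Walk.isPath_def, Walk.support_append]
    apply List.Nodup.append
    · exact (Walk.bypass_isPath p₁).support_nodup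
    · exact ((Walk.bypass_isPath p₂).support_nodup).tail
    · intro x hx1 hx2
      have hx2' : x ∈ P₂.support := List.mem_of_mem_tail hx2
      have := hdisj x hx1 hx2'
      subst this
      have hnd := (Walk.bypass_isPath p₂).support_nodup
      rw [Walk.support_eq_cons] at hnd
      exact (List.nodup_cons.mp hnd).1 hx2
  have hmr : m ∈ (P₁.append P₂).support := by
    rw [Walk.support_append]
    exact List.mem_append_left _ (Walk.end_mem_support P₁)
  have huniq := SimpleGraph.isAcyclic_iff_path_unique.mp hacyc
    ⟨q.bypass, Walk.bypass_isPath q⟩ ⟨P₁.append P₂, hrpath⟩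
  have : q.bypass = P₁.append P₂ := congrArg Subtype.val huniq
  exact Walk.support_bypass_subset q (this ▸ hmr)

lemma main_of_acyclic (hconn : (triGrid.induce M).Connected)
    (hacyc : (portalGraph M e).IsAcyclic) (g g' : ↥M) :
    ∀ p : (triGrid.induce M).Walk g g', ∃ w ∈ p.support,
      portalDist M e g w = (portalDist M e g g' + 1) / 2 ∧
      portalDist M e g' w = portalDist M e g g' / 2 := by
  intro p
  have hPconn := portalGraph_connected (e := e) hconn
  have hpd : ∀ a b : ↥M, portalDist M e a b =
      (portalGraph M e).dist (portalMk M e a) (portalMk M e b) := fun _ _ => rfl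
  obtain ⟨m, hm1, hm2⟩ := exists_middle hPconn (portalMk M e g) (portalMk M e g')
    (((portalGraph M e).dist (portalMk M e g) (portalMk M e g') + 1) / 2) (by omega)
  obtain ⟨q, hq⟩ := toPortalWalk (e := e) p
  have hmq : m ∈ q.support := walk_through_middle hPconn hacyc (by omega) q
  obtain ⟨w, hw, hwm⟩ := hq m hmq
  refine ⟨w, hw, ?_, ?_⟩
  · rw [hpd, hpd, hwm]
    exact hm1
  · rw [hpd, hpd, hwm, SimpleGraph.dist_comm]
    omega

end Phase1

section Transport

lemma triGrid_adj_iff {u v : ℤ × ℤ} : triGrid.Adj u v ↔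
    ((u.1 = v.1 + 1 ∧ u.2 = v.2) ∨ (u.1 + 1 = v.1 ∧ u.2 = v.2) ∨
    (u.1 = v.1 ∧ u.2 = v.2 + 1) ∨ (u.1 = v.1 ∧ u.2 + 1 = v.2) ∨
    (u.1 = v.1 + 1 ∧ u.2 + 1 = v.2) ∨ (u.1 + 1 = v.1 ∧ u.2 = v.2 + 1)) := by
  constructor
  · exact triGrid_adj_coords
  · intro h
    rcases h with ⟨a,b⟩|⟨a,b⟩|⟨a,b⟩|⟨a,b⟩|⟨a,b⟩|⟨a,b⟩
    · exact Or.inl (by rw [Prod.ext_iff]; simp only [Prod.fst_sub, Prod.snd_sub]; omega)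
    · exact Or.inr (Or.inl (by rw [Prod.ext_iff]; simp only [Prod.fst_sub, Prod.snd_sub]; omega))
    · exact Or.inr (Or.inr (Or.inl
        (by rw [Prod.ext_iff]; simp only [Prod.fst_sub, Prod.snd_sub]; omega)))
    · exact Or.inr (Or.inr (Or.inr (Or.inl
        (by rw [Prod.ext_iff]; simp only [Prod.fst_sub, Prod.snd_sub]; omega))))
    · exact Or.inr (Or.inr (Or.inr (Or.inr (Or.inl
        (by rw [Prod.ext_iff]; simp only [Prod.fst_sub, Prod.snd_sub]; omega)))))
    · exact Or.inr (Or.inr (Or.inr (Or.inr (Or.inr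
        (by rw [Prod.ext_iff]; simp only [Prod.fst_sub, Prod.snd_sub]; omega)))))

variable (σ : (ℤ × ℤ) ≃ (ℤ × ℤ))

lemma holefree_transport (hadj : ∀ u v, triGrid.Adj (σ u) (σ v) ↔ triGrid.Adj u v)
    {M : Set (ℤ × ℤ)} (hs : HoleFree M) : HoleFree (σ '' M) := by
  intro D
  obtain ⟨⟨y, hy⟩, hyD⟩ := D.exists_rep
  have hx : σ.symm y ∈ Mᶜ := fun hmem => hy ⟨σ.symm y, hmem, by simp⟩
  have hdefC := hs ((triGrid.induce Mᶜ).connectedComponentMk ⟨σ.symm y, hx⟩)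
  -- the hom from induce Mᶜ to induce (σ '' M)ᶜ
  have hmemmap : ∀ u : ↥(Mᶜ), σ u.val ∈ (σ '' M)ᶜ := by
    intro u hmem
    obtain ⟨x0, hx0, hx0e⟩ := hmem
    exact u.2 (by rwa [show x0 = u.val from σ.injective hx0e] at hx0)
  let f : ↥(Mᶜ) → ↥((σ '' M)ᶜ) := fun u => ⟨σ u.val, hmemmap u⟩
  have hf : ∀ u v : ↥(Mᶜ), (triGrid.induce Mᶜ).Adj u v →
      (triGrid.induce (σ '' M)ᶜ).Adj (f u) (f v) := by
    intro u v h
    exact (hadj u.val v.val).mpr h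
  let hom : (triGrid.induce Mᶜ) →g (triGrid.induce (σ '' M)ᶜ) := ⟨f, fun h => hf _ _ h⟩
  have hmk : ∀ u : ↥(Mᶜ), (triGrid.induce Mᶜ).connectedComponentMk u =
      (triGrid.induce Mᶜ).connectedComponentMk ⟨σ.symm y, hx⟩ →
      (triGrid.induce (σ '' M)ᶜ).connectedComponentMk (f u) = D := by
    intro u hu
    obtain ⟨w⟩ := SimpleGraph.ConnectedComponent.exact hu
    have hr : (triGrid.induce (σ '' M)ᶜ).Reachable (f u) (f ⟨σ.symm y, hx⟩) := ⟨w.map hom⟩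
    have hfy : f ⟨σ.symm y, hx⟩ = ⟨y, hy⟩ := Subtype.ext (by simp [f])
    rw [← hyD, ← hfy]
    exact SimpleGraph.ConnectedComponent.sound hr
  apply Set.Infinite.mono (s := f '' ((triGrid.induce Mᶜ).connectedComponentMk
    ⟨σ.symm y, hx⟩).supp)
  · intro a ha
    obtain ⟨u, hu, rfl⟩ := ha
    exact hmk u hu
  · exact Set.Infinite.image
      (Set.injOn_of_injective (fun a b hab => Subtype.ext (σ.injective (congrArg Subtype.val hab))))
      hdefC

lemma acyclic_transport (hadj : ∀ u v, triGrid.Adj (σ u) (σ v) ↔ triGrid.Adj u v)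
    (e : ℤ × ℤ)
    (hdir : ∀ u v : ℤ × ℤ, (u - v = e ∨ v - u = e) ↔
      (σ u - σ v = ((1:ℤ),(0:ℤ)) ∨ σ v - σ u = ((1:ℤ),(0:ℤ))))
    {M : Set (ℤ × ℤ)} (hfin : M.Finite) (hsimple : HoleFree M) :
    (portalGraph M e).IsAcyclic := by
  set N := σ '' M with hN
  have hNfin : N.Finite := hfin.image σ
  have hNsimple : HoleFree N := holefree_transport σ hadj hsimple
  have hNacyc := acyclic_ex hNfin hNsimple
  -- line graph homs
  have hmemmap : ∀ u : ↥M, σ u.val ∈ N := fun u => ⟨u.val, u.2, rfl⟩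
  have hmemmapinv : ∀ u : ↥N, σ.symm u.val ∈ M := by
    intro u
    obtain ⟨x0, hx0, hx0e⟩ := u.2
    rwa [← hx0e, Equiv.symm_apply_apply]
  let f : ↥M → ↥N := fun u => ⟨σ u.val, hmemmap u⟩
  let finv : ↥N → ↥M := fun u => ⟨σ.symm u.val, hmemmapinv u⟩
  have hdir' : ∀ a b : ℤ × ℤ, (a - b = ((1:ℤ),(0:ℤ)) ∨ b - a = ((1:ℤ),(0:ℤ))) ↔
      (σ.symm a - σ.symm b = e ∨ σ.symm b - σ.symm a = e) := by
    intro a b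
    have := hdir (σ.symm a) (σ.symm b)
    simp only [Equiv.apply_symm_apply] at this
    exact this.symm
  let lhom : portalLineGraph M e →g portalLineGraph N (1,0) :=
    ⟨f, fun {u v} h => ⟨(hadj u.val v.val).mpr h.1, (hdir u.val v.val).mp h.2⟩⟩
  let lhominv : portalLineGraph N (1,0) →g portalLineGraph M e :=
    ⟨finv, fun {u v} h => ⟨by
        have := (hadj (σ.symm u.val) (σ.symm v.val)).mp
        simp only [Equiv.apply_symm_apply] at this
        exact this h.1, (hdir' u.val v.val).mp h.2⟩⟩
  let Φ : Portal M e → Portal N (1,0) := SimpleGraph.ConnectedComponent.map lhom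
  let Φinv : Portal N (1,0) → Portal M e := SimpleGraph.ConnectedComponent.map lhominv
  have hΦmk : ∀ u : ↥M, Φ (portalMk M e u) = portalMk N (1,0) (f u) := by
    intro u; rfl
  have hΦinj : Function.Injective Φ := by
    have hleft : Function.LeftInverse Φinv Φ := by
      intro P
      refine SimpleGraph.ConnectedComponent.ind (fun u => ?_) P
      show Φinv (Φ (portalMk M e u)) = portalMk M e u
      rw [hΦmk]
      show portalMk M e (finv (f u)) = portalMk M e u
      congr 1
      exact Subtype.ext (by simp [f, finv])
    exact hleft.injective
  have hΦadj : ∀ P Q, (portalGraph M e).Adj P Q → (portalGraph N (1,0)).Adj (Φ P) (Φ Q) := by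
    rintro P Q ⟨hne, u, v, huv, hu, hv⟩
    refine ⟨fun hc => hne (hΦinj hc), f u, f v, (hadj u.val v.val).mpr huv, ?_, ?_⟩
    · rw [← hu]; rfl
    · rw [← hv]; rfl
  intro V0 c hc
  have := hNacyc (Walk.map ⟨Φ, fun h => hΦadj _ _ h⟩ c)
  exact this (hc.map hΦinj)

end Transport

def sigY : (ℤ × ℤ) ≃ (ℤ × ℤ) where
  toFun p := (p.2, p.1)
  invFun p := (p.2, p.1)
  left_inv p := by simp
  right_inv p := by simp

def sigZ : (ℤ × ℤ) ≃ (ℤ × ℤ) where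
  toFun p := (-p.2, p.1 + p.2)
  invFun p := (p.1 + p.2, -p.1)
  left_inv p := by obtain ⟨a, b⟩ := p; simp [Prod.ext_iff]
  right_inv p := by obtain ⟨a, b⟩ := p; simp [Prod.ext_iff]

lemma sigY_adj : ∀ u v, triGrid.Adj (sigY u) (sigY v) ↔ triGrid.Adj u v := by
  intro u v
  simp only [triGrid_adj_iff, sigY, Equiv.coe_fn_mk]
  omega

lemma sigZ_adj : ∀ u v, triGrid.Adj (sigZ u) (sigZ v) ↔ triGrid.Adj u v := by
  intro u v
  simp only [triGrid_adj_iff, sigZ, Equiv.coe_fn_mk]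
  omega

lemma sigY_dir : ∀ u v : ℤ × ℤ, (u - v = ((0:ℤ),(1:ℤ)) ∨ v - u = ((0:ℤ),(1:ℤ))) ↔
    (sigY u - sigY v = ((1:ℤ),(0:ℤ)) ∨ sigY v - sigY u = ((1:ℤ),(0:ℤ))) := by
  intro u v
  simp only [sigY, Equiv.coe_fn_mk, Prod.ext_iff, Prod.fst_sub, Prod.snd_sub]
  omega

lemma sigZ_dir : ∀ u v : ℤ × ℤ, (u - v = ((1:ℤ),(-1:ℤ)) ∨ v - u = ((1:ℤ),(-1:ℤ))) ↔
    (sigZ u - sigZ v = ((1:ℤ),(0:ℤ)) ∨ sigZ v - sigZ u = ((1:ℤ),(0:ℤ))) := by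
  intro u v
  simp only [sigZ, Equiv.coe_fn_mk, Prod.ext_iff, Prod.fst_sub, Prod.snd_sub]
  omega


/-- For a finite, connected, hole-free `M` and `g, g' ∈ M`, every path from
`g` to `g'` in the subgraph induced on `M` contains a vertex of the set
`P_q = {v ∈ M : d_{M,q}(g,v) = ⌈d_q/2⌉ ∧ d_{M,q}(g',v) = ⌊d_q/2⌋}`. -/
theorem middle_set_separates (M : Set (ℤ × ℤ)) (hfin : M.Finite)
    (hconn : (triGrid.induce M).Connected) (hsimple : HoleFree M)
    (g g' : M) (e : ℤ × ℤ) (he : e ∈ ({(1, 0), (0, 1), (1, -1)} : Set (ℤ × ℤ))) :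
    ∀ p : (triGrid.induce M).Walk g g', ∃ w ∈ p.support,
      portalDist M e g w = (portalDist M e g g' + 1) / 2 ∧
      portalDist M e g' w = portalDist M e g g' / 2 := by
  have hacyc : (portalGraph M e).IsAcyclic := by
    simp only [Set.mem_insert_iff, Set.mem_singleton_iff] at he
    rcases he with rfl | rfl | rfl
    · exact acyclic_ex hfin hsimple
    · exact acyclic_transport sigY sigY_adj _ sigY_dir hfin hsimple
    · exact acyclic_transport sigZ sigZ_adj _ sigZ_dir hfin hsimple
  exact main_of_acyclic hconn hacyc g g'
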